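/- For every mod-finite permutation p of ℕ, at least one of the following holds: (a) p* is a quotient of t*, where t : ℕ × ℤ → ℕ × ℤ is t(n,z) = (n,z+1), i.e., there is a continuous surjection Q : (ℕ × ℤ)* → ℕ* with Q ∘ t* = p* ∘ Q; or (b) p* is a quotient of (t ∨ r)*, where t ∨ r is the bijection of the disjoint union (ℕ × ℤ) ⊔ D_r acting as t on ℕ × ℤ and as r on D_r, i.e., there is a continuous surjection Q : ((ℕ × ℤ) ⊔ D_r)* → ℕ* with Q ∘ (t ∨ r)* = p* ∘ Q. (This is a ZFC theorem; dually, every trivial automorphism of P(ω)/fin embeds in t^↑ or in (t ∨ r)^↑.) -/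

import Mathlib

open Filter Topology

/-- The space of free (non-principal) ultrafilters on `D`, with the subspace
topology inherited from the space of all ultrafilters on `D`. -/
abbrev FreeUF (D : Type*) := {U : Ultrafilter D // (U : Filter D) ≤ Filter.cofinite}

lemma finiteToOne_of_injective {D E : Type*} {f : D → E} (hf : Function.Injective f) (e : E) :
    (f ⁻¹' {e}).Finite := by
  apply Set.Subsingleton.finite
  intro a ha b hb
  simp only [Set.mem_preimage, Set.mem_singleton_iff] at ha hb
  exact hf (ha.trans hb.symm)

lemma map_le_cofinite {D : Type*} {f : D → D} (hf : ∀ d : D, (f ⁻¹' {d}).Finite)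
    {U : Ultrafilter D} (hU : (U : Filter D) ≤ Filter.cofinite) :
    (Ultrafilter.map f U : Filter D) ≤ Filter.cofinite := by
  rw [Filter.le_cofinite_iff_compl_singleton_mem]
  intro x
  have h1 : (f ⁻¹' {x})ᶜ ∈ (U : Filter D) := hU ((hf x).compl_mem_cofinite)
  rw [Ultrafilter.coe_map, Filter.mem_map]
  simpa [Set.preimage_compl] using h1

/-- The trivial map `f*` on free ultrafilters induced by a finite-to-one map `f`,
sending an ultrafilter to its pushforward. -/
def ufMap {D : Type*} (f : D → D) (hf : ∀ d : D, (f ⁻¹' {d}).Finite) (U : FreeUF D) :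
    FreeUF D :=
  ⟨Ultrafilter.map f U.1, map_le_cofinite hf U.2⟩

/-- `X` has weight at most `c`: it has a topological basis of cardinality at most `c`. -/
def HasWeightLE (X : Type) [TopologicalSpace X] (c : Cardinal) : Prop :=
  ∃ B : Set (Set X), TopologicalSpace.IsTopologicalBasis B ∧ Cardinal.mk B ≤ c

/-- The index set `D_r = {(n,m) : n ≥ 1, 0 ≤ m < n!}`. -/
abbrev Dr : Type := {q : ℕ × ℕ // 1 ≤ q.1 ∧ q.2 < Nat.factorial q.1}

/-- The permutation `r(n,m) = (n, m+1 mod n!)` of `D_r`: a disjoint union of finite cycles,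
one of length `n!` for each `n ≥ 1`. -/
def rcyc : Dr → Dr := fun q =>
  ⟨(q.1.1, (q.1.2 + 1) % Nat.factorial q.1.1), q.2.1, Nat.mod_lt _ (Nat.factorial_pos _)⟩

lemma succ_mod_eq {N : ℕ} : ∀ k : ℕ, k < N → (k + 1) % N = if k + 1 = N then 0 else k + 1 := by
  intro k hk
  rcases eq_or_lt_of_le (show k + 1 ≤ N from hk) with h1 | h1
  · rw [if_pos h1, h1, Nat.mod_self]
  · rw [if_neg (by omega), Nat.mod_eq_of_lt h1]

lemma succ_mod_inj {N m m' : ℕ} (hm : m < N) (hm' : m' < N)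
    (h : (m + 1) % N = (m' + 1) % N) : m = m' := by
  rw [succ_mod_eq m hm, succ_mod_eq m' hm'] at h
  split_ifs at h <;> omega

lemma rcyc_injective : Function.Injective rcyc := by
  rintro ⟨⟨n, m⟩, h1, h2⟩ ⟨⟨n', m'⟩, h1', h2'⟩ h
  simp only [rcyc, Subtype.mk.injEq, Prod.mk.injEq] at h
  obtain ⟨hn, hm⟩ := h
  subst hn
  simp only [Subtype.mk.injEq, Prod.mk.injEq]
  exact ⟨trivial, succ_mod_inj h2 h2' hm⟩

/-- The map `t(n,z) = (n, z+1)` on `ℕ × ℤ`. -/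
def tmap : ℕ × ℤ → ℕ × ℤ := fun p => (p.1, p.2 + 1)

lemma tmap_injective : Function.Injective tmap := by
  rintro ⟨a, m⟩ ⟨b, n⟩ h
  simp only [tmap, Prod.mk.injEq] at h ⊢
  exact ⟨h.1, by omega⟩


open Set Function

section Generic

lemma uf_not_mem_of_finite {α : Type*} {U : Ultrafilter α} (hU : (U : Filter α) ≤ cofinite)
    {s : Set α} (hs : s.Finite) : s ∉ U :=
  Ultrafilter.compl_mem_iff_notMem.mp (hU hs.compl_mem_cofinite)

lemma uf_mem_of_cofinite {α : Type*} {U : Ultrafilter α} (hU : (U : Filter α) ≤ cofinite)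
    {s : Set α} (hs : sᶜ.Finite) : s ∈ U :=
  hU (by simpa [Filter.mem_cofinite] using hs)

lemma exists_free_mem {α : Type*} {s : Set α} (hs : s.Infinite) :
    ∃ U : Ultrafilter α, (U : Filter α) ≤ cofinite ∧ s ∈ U := by
  haveI : (cofinite ⊓ 𝓟 s).NeBot := hs.cofinite_inf_principal_neBot
  refine ⟨Ultrafilter.of (cofinite ⊓ 𝓟 s), (Ultrafilter.of_le _).trans inf_le_left, ?_⟩
  exact (Ultrafilter.of_le _) (mem_inf_of_right (mem_principal_self s))

lemma mem_uf_bind {α β : Type*} {U : Ultrafilter α} {ν : α → Ultrafilter β} {s : Set β} :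
    s ∈ U.bind ν ↔ {a | s ∈ ν a} ∈ U := Filter.mem_bind'

lemma uf_mem_congr {α : Type*} {U : Ultrafilter α} (hU : (U : Filter α) ≤ cofinite)
    {s t D : Set α} (hD : D.Finite) (h : ∀ a ∉ D, (a ∈ s ↔ a ∈ t)) : s ∈ U ↔ t ∈ U := by
  have hDc : Dᶜ ∈ U := uf_mem_of_cofinite hU (by simpa using hD)
  constructor
  · intro hs
    exact Filter.mem_of_superset (inter_mem hs hDc) (fun a ⟨ha, haD⟩ => (h a haD).mp ha)
  · intro ht
    exact Filter.mem_of_superset (inter_mem ht hDc) (fun a ⟨ha, haD⟩ => (h a haD).mpr ha)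

lemma freeUF_isClosed (D : Type*) :
    IsClosed {U : Ultrafilter D | (U : Filter D) ≤ cofinite} := by
  have : {U : Ultrafilter D | (U : Filter D) ≤ cofinite}ᶜ = ⋃ d : D, {U | {d} ∈ U} := by
    ext U
    simp only [mem_compl_iff, mem_setOf_eq, mem_iUnion, Filter.le_cofinite_iff_compl_singleton_mem]
    constructor
    · intro h
      push_neg at h
      obtain ⟨d, hd⟩ := h
      refine ⟨d, ?_⟩
      by_contra hd2
      exact hd (Ultrafilter.compl_mem_iff_notMem.mpr hd2)
    · rintro ⟨d, hd⟩ h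
      exact Ultrafilter.compl_mem_iff_notMem.mp (h d) hd
  rw [← isOpen_compl_iff, this]
  exact isOpen_iUnion fun d => ultrafilter_isOpen_basic _

theorem build_Q {Y : Type} (g : Y → Y) (hg : ∀ d : Y, (g ⁻¹' {d}).Finite)
    (p : ℕ → ℕ) (hp : ∀ n : ℕ, (p ⁻¹' {n}).Finite)
    (ν : Y → Ultrafilter ℕ)
    (h1 : ∀ m : ℕ, {y : Y | {m} ∈ ν y}.Finite)
    (h2 : {y : Y | Ultrafilter.map p (ν y) ≠ ν (g y)}.Finite)
    (h3 : ∀ A : Set ℕ, A.Infinite → {y : Y | A ∈ ν y}.Infinite) :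
    ∃ Q : FreeUF Y → FreeUF ℕ, Continuous Q ∧ Function.Surjective Q ∧
      ∀ U, Q (ufMap g hg U) = ufMap p hp (Q U) := by
  have freeQ : ∀ U : FreeUF Y, ((U.1.bind ν : Ultrafilter ℕ) : Filter ℕ) ≤ cofinite := by
    intro U
    rw [Filter.le_cofinite_iff_compl_singleton_mem]
    intro m
    rw [Ultrafilter.mem_coe, mem_uf_bind]
    apply uf_mem_of_cofinite U.2
    have : {a : Y | {m}ᶜ ∈ ν a}ᶜ = {y : Y | {m} ∈ ν y} := by
      ext y; simp [Ultrafilter.compl_mem_iff_notMem]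
    rw [this]
    exact h1 m
  refine ⟨fun U => ⟨U.1.bind ν, freeQ U⟩, ?_, ?_, ?_⟩
  · -- continuity
    apply Continuous.subtype_mk
    apply (ultrafilterBasis_is_basis (α := ℕ)).continuous_iff.mpr
    rintro s ⟨A, rfl⟩
    have : (fun U : FreeUF Y => U.1.bind ν) ⁻¹' {u | A ∈ u}
        = Subtype.val ⁻¹' {u : Ultrafilter Y | {y | A ∈ ν y} ∈ u} := by
      ext U
      simp [mem_uf_bind]
    rw [this]
    exact (ultrafilter_isOpen_basic _).preimage continuous_subtype_val
  · -- surjectivity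
    haveI : CompactSpace (FreeUF Y) :=
      isCompact_iff_compactSpace.mp ((freeUF_isClosed Y).isCompact)
    have contQ : Continuous (fun U : FreeUF Y => (⟨U.1.bind ν, freeQ U⟩ : FreeUF ℕ)) := by
      apply Continuous.subtype_mk
      apply (ultrafilterBasis_is_basis (α := ℕ)).continuous_iff.mpr
      rintro s ⟨A, rfl⟩
      have : (fun U : FreeUF Y => U.1.bind ν) ⁻¹' {u | A ∈ u}
          = Subtype.val ⁻¹' {u : Ultrafilter Y | {y | A ∈ ν y} ∈ u} := by
        ext U
        simp [mem_uf_bind]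
      rw [this]
      exact (ultrafilter_isOpen_basic _).preimage continuous_subtype_val
    have closedRange : IsClosed (Set.range (fun U : FreeUF Y => (⟨U.1.bind ν, freeQ U⟩ : FreeUF ℕ))) :=
      (isCompact_range contQ).isClosed
    intro V
    suffices hV : V ∈ closure (Set.range (fun U : FreeUF Y => (⟨U.1.bind ν, freeQ U⟩ : FreeUF ℕ))) by
      rwa [closedRange.closure_eq] at hV
    rw [mem_closure_iff]
    intro O hO hVO
    obtain ⟨O', hO', rfl⟩ := isOpen_induced_iff.mp hO
    obtain ⟨s, ⟨A, rfl⟩, hVs, hsO⟩ :=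
      (ultrafilterBasis_is_basis (α := ℕ)).exists_subset_of_mem_open hVO hO'
    have hAinf : A.Infinite := by
      by_contra hfin
      rw [Set.not_infinite] at hfin
      exact uf_not_mem_of_finite V.2 hfin hVs
    obtain ⟨U, hUfree, hUS⟩ := exists_free_mem (h3 A hAinf)
    refine ⟨⟨U.bind ν, freeQ ⟨U, hUfree⟩⟩, ?_, ⟨⟨U, hUfree⟩, rfl⟩⟩
    · show _ ∈ Subtype.val ⁻¹' O'
      exact hsO (mem_uf_bind.mpr hUS)
  · -- equivariance
    intro U
    apply Subtype.ext
    show (Ultrafilter.map g U.1).bind ν = Ultrafilter.map p (U.1.bind ν)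
    apply Ultrafilter.coe_injective
    apply Filter.ext
    intro s
    rw [show (s ∈ ((Ultrafilter.map g U.1).bind ν : Filter ℕ)) ↔ s ∈ (Ultrafilter.map g U.1).bind ν from Iff.rfl,
      show (s ∈ ((Ultrafilter.map p (U.1.bind ν)) : Filter ℕ)) ↔ s ∈ Ultrafilter.map p (U.1.bind ν) from Iff.rfl,
      mem_uf_bind, Ultrafilter.mem_map, Ultrafilter.mem_map, mem_uf_bind]
    show g ⁻¹' {y | s ∈ ν y} ∈ U.1 ↔ {y | p ⁻¹' s ∈ ν y} ∈ U.1
    apply uf_mem_congr U.2 h2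
    intro y hy
    simp only [Set.mem_setOf_eq, not_not] at hy
    simp only [Set.mem_preimage, Set.mem_setOf_eq]
    rw [← hy, Ultrafilter.mem_map]

end Generic


section PerTheory

variable (p : ℕ → ℕ)

def Per : Set ℕ := {n | ∃ k, 0 < k ∧ p^[k] n = n}

variable {p}

lemma per_iterate {n : ℕ} (h : n ∈ Per p) (k : ℕ) : p^[k] n ∈ Per p := by
  obtain ⟨e, he, hne⟩ := h
  refine ⟨e, he, ?_⟩
  rw [← Function.iterate_add_apply, Nat.add_comm, Function.iterate_add_apply, hne]

lemma per_image {n : ℕ} (h : n ∈ Per p) : p n ∈ Per p := by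
  simpa using per_iterate h 1

lemma per_pre {x : ℕ} (h : x ∈ Per p) : ∃ w ∈ Per p, p w = x := by
  obtain ⟨e, he, hne⟩ := h
  refine ⟨p^[e-1] x, per_iterate ⟨e, he, hne⟩ (e-1), ?_⟩
  rw [← Function.iterate_succ_apply' p (e-1) x, Nat.succ_eq_add_one,
    show e - 1 + 1 = e by omega, hne]

lemma iterate_split (p : ℕ → ℕ) {k j : ℕ} (h : k ≤ j) (a : ℕ) :
    p^[j] a = p^[j - k] (p^[k] a) := by
  conv_lhs => rw [show j = (j - k) + k by omega]
  rw [Function.iterate_add_apply]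

end PerTheory

section ReachTheory

variable (p : ℕ → ℕ) (A : Set ℕ)

def Dg : Set ℕ := A \ Per p

def Reach (m n : ℕ) : Prop := ∃ k : ℕ, (∀ j < k, p^[j] m ∈ Dg p A) ∧ p^[k] m = n

variable {p A}

lemma reach_refl (n : ℕ) : Reach p A n n := ⟨0, by simp, rfl⟩

lemma reach_aperiodic {k n : ℕ} (hk : 0 < k) (hpath : ∀ j < k, p^[j] n ∈ Dg p A)
    (heq : p^[k] n = n) : False := by
  have h0 : n ∈ Dg p A := by simpa using hpath 0 hk
  exact h0.2 ⟨k, hk, heq⟩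

lemma reach_k_unique {m n k k' : ℕ} (hp1 : ∀ j < k, p^[j] m ∈ Dg p A) (he1 : p^[k] m = n)
    (hp2 : ∀ j < k', p^[j] m ∈ Dg p A) (he2 : p^[k'] m = n) : k = k' := by
  have key : ∀ a b : ℕ, a < b → (∀ j < a, p^[j] m ∈ Dg p A) → p^[a] m = n →
      (∀ j < b, p^[j] m ∈ Dg p A) → p^[b] m = n → False := by
    intro a b hab hpa hea hpb heb
    apply reach_aperiodic (p := p) (A := A) (k := b - a) (n := n) (by omega)
    · intro j hj
      have : p^[j] n = p^[j + a] m := by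
        rw [← hea, ← Function.iterate_add_apply]
      rw [this]
      exact hpb _ (by omega)
    · calc p^[b-a] n = p^[b-a] (p^[a] m) := by rw [hea]
        _ = p^[b] m := by
            rw [← Function.iterate_add_apply, Nat.sub_add_cancel (le_of_lt hab)]
        _ = n := heb
  rcases lt_trichotomy k k' with h | h | h
  · exact absurd (key k k' h hp1 he1 hp2 he2) (fun f => f.elim)
  · exact h
  · exact absurd (key k' k h hp2 he2 hp1 he1) (fun f => f.elim)

lemma reach_concat {a b c : ℕ} : Reach p A a b → Reach p A b c → Reach p A a c := by
  rintro ⟨k, hk, rfl⟩ ⟨l, hl, rfl⟩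
  refine ⟨l + k, ?_, (Function.iterate_add_apply p l k a)⟩
  intro j hj
  by_cases hjk : j < k
  · exact hk j hjk
  · have : p^[j] a = p^[j - k] (p^[k] a) := iterate_split p (by omega) a
    rw [this]
    exact hl _ (by omega)

lemma iterate_cancel (hinj : Set.InjOn p A) {k m n : ℕ}
    (hm : ∀ j < k, p^[j] m ∈ A) (hn : ∀ j < k, p^[j] n ∈ A) (h : p^[k] m = p^[k] n) :
    m = n := by
  induction k with
  | zero => simpa using h
  | succ k ih =>
    apply ih (fun j hj => hm j (by omega)) (fun j hj => hn j (by omega))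
    apply hinj (hm k (by omega)) (hn k (by omega))
    rw [← Function.iterate_succ_apply' p k m, ← Function.iterate_succ_apply' p k n, h]

/-- two forward reaches from the same point are comparable -/
lemma reach_fwd {a b c : ℕ} {k l : ℕ} (hkl : k ≤ l)
    (hk : ∀ j < k, p^[j] a ∈ Dg p A) (he : p^[k] a = b)
    (hl : ∀ j < l, p^[j] a ∈ Dg p A) (he' : p^[l] a = c) :
    (∀ j < l - k, p^[j] b ∈ Dg p A) ∧ p^[l - k] b = c := by
  constructor
  · intro j hj
    have : p^[j] b = p^[j + k] a := by rw [← he, ← Function.iterate_add_apply]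
    rw [this]
    exact hl _ (by omega)
  · rw [← he, ← Function.iterate_add_apply, Nat.sub_add_cancel hkl, he']

/-- two backward reaches to the same point are comparable -/
lemma reach_bwd (hinj : Set.InjOn p A) {a b c : ℕ} {k l : ℕ} (hkl : k ≤ l)
    (hk : ∀ j < k, p^[j] b ∈ Dg p A) (he : p^[k] b = a)
    (hl : ∀ j < l, p^[j] c ∈ Dg p A) (he' : p^[l] c = a) :
    (∀ j < l - k, p^[j] c ∈ Dg p A) ∧ p^[l - k] c = b := by
  have hpath : ∀ j < l - k, p^[j] c ∈ Dg p A := fun j hj => hl _ (by omega)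
  refine ⟨hpath, ?_⟩
  apply iterate_cancel hinj (k := k)
  · intro j hj
    have : p^[j] (p^[l-k] c) = p^[j + (l-k)] c := by rw [Function.iterate_add_apply]
    rw [this]
    exact (hl _ (by omega)).1
  · exact fun j hj => (hk j hj).1
  · calc p^[k] (p^[l-k] c) = p^[k + (l-k)] c := (Function.iterate_add_apply p k (l-k) c).symm
      _ = p^[l] c := by rw [show k + (l - k) = l by omega]
      _ = a := he'
      _ = p^[k] b := he.symm

variable (p A) in
def RelR (m n : ℕ) : Prop := Reach p A m n ∨ Reach p A n m

lemma relR_refl (n : ℕ) : RelR p A n n := Or.inl (reach_refl n)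

lemma relR_symm {m n : ℕ} (h : RelR p A m n) : RelR p A n m := h.symm

lemma relR_trans (hinj : Set.InjOn p A) {a b c : ℕ}
    (h1 : RelR p A a b) (h2 : RelR p A b c) : RelR p A a c := by
  rcases h1 with ⟨k, hk, he⟩ | ⟨k, hk, he⟩ <;> rcases h2 with ⟨l, hl, he'⟩ | ⟨l, hl, he'⟩
  · exact Or.inl (reach_concat ⟨k, hk, he⟩ ⟨l, hl, he'⟩)
  · -- a → b, c → b
    rcases le_or_gt k l with h | h
    · exact Or.inr ⟨l - k, (reach_bwd hinj h hk he hl he').1, (reach_bwd hinj h hk he hl he').2⟩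
    · exact Or.inl ⟨k - l, (reach_bwd hinj (le_of_lt h) hl he' hk he).1,
        (reach_bwd hinj (le_of_lt h) hl he' hk he).2⟩
  · -- b → a, b → c
    rcases le_or_gt k l with h | h
    · exact Or.inl ⟨l - k, (reach_fwd h hk he hl he').1, (reach_fwd h hk he hl he').2⟩
    · exact Or.inr ⟨k - l, (reach_fwd (le_of_lt h) hl he' hk he).1,
        (reach_fwd (le_of_lt h) hl he' hk he).2⟩
  · exact Or.inr (reach_concat ⟨l, hl, he'⟩ ⟨k, hk, he⟩)

variable (p A) in
noncomputable def repC (n : ℕ) : ℕ := sInf {m | RelR p A m n}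

lemma repC_rel (n : ℕ) : RelR p A (repC p A n) n :=
  Nat.sInf_mem (⟨n, relR_refl n⟩ : {m | RelR p A m n}.Nonempty)

lemma repC_congr (hinj : Set.InjOn p A) {m n : ℕ} (h : RelR p A m n) :
    repC p A m = repC p A n := by
  unfold repC
  congr 1
  ext x
  exact ⟨fun hx => relR_trans hinj hx h, fun hx => relR_trans hinj hx (relR_symm h)⟩

open Classical in
noncomputable def grd (p : ℕ → ℕ) (A : Set ℕ) (m n : ℕ) : ℤ :=
  if h : Reach p A m n then (h.choose : ℤ)
  else if h' : Reach p A n m then -(h'.choose : ℤ) else 0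

lemma grd_eq_of_reach {m n : ℕ} {k : ℕ} (hpath : ∀ j < k, p^[j] m ∈ Dg p A)
    (heq : p^[k] m = n) : grd p A m n = k := by
  have h : Reach p A m n := ⟨k, hpath, heq⟩
  rw [grd, dif_pos h]
  exact_mod_cast reach_k_unique h.choose_spec.1 h.choose_spec.2 hpath heq

lemma reach_antisymm {m n : ℕ} (hmn : Reach p A m n) (hnm : Reach p A n m) : m = n := by
  obtain ⟨k, hk, he⟩ := hmn
  obtain ⟨l, hl, he'⟩ := hnm
  have hconc := reach_concat ⟨k, hk, he⟩ ⟨l, hl, he'⟩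
  obtain ⟨s, hs, hse⟩ := hconc
  have hs0 : s = 0 := reach_k_unique hs hse (by simp) rfl
  by_cases hk0 : k = 0
  · subst hk0; simpa using he
  · exfalso
    exact reach_aperiodic (k := l + k) (n := m) (by omega)
      (by
        intro j hj
        by_cases hjk : j < k
        · exact hk j hjk
        · have : p^[j] m = p^[j - k] (p^[k] m) := iterate_split p (by omega) m
          rw [this, he]
          exact hl _ (by omega))
      (by rw [Function.iterate_add_apply, he, he'])

lemma grd_eq_of_reach_rev {m n : ℕ} {k : ℕ} (hpath : ∀ j < k, p^[j] n ∈ Dg p A)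
    (heq : p^[k] n = m) : grd p A m n = -(k : ℤ) := by
  by_cases h : Reach p A m n
  · have hmn : m = n := reach_antisymm h ⟨k, hpath, heq⟩
    subst hmn
    have hk0 : k = 0 := reach_k_unique hpath heq (by simp) rfl
    subst hk0
    simpa using grd_eq_of_reach (p := p) (A := A) (m := m) (n := m) (k := 0) (by simp) rfl
  · have hR : Reach p A n m := ⟨k, hpath, heq⟩
    rw [grd, dif_neg h, dif_pos hR]
    have hc := reach_k_unique hR.choose_spec.1 hR.choose_spec.2 hpath heq
    rw [hc]

lemma grd_add (hinj : Set.InjOn p A) {r a b : ℕ} {k : ℕ} (hrel : RelR p A r a)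
    (hpath : ∀ j < k, p^[j] a ∈ Dg p A) (heq : p^[k] a = b) :
    grd p A r b = grd p A r a + k := by
  rcases hrel with ⟨l, hl, he⟩ | ⟨l, hl, he⟩
  · -- Reach r a with l
    have h1 : grd p A r a = l := grd_eq_of_reach hl he
    have hconc := reach_concat ⟨l, hl, he⟩ ⟨k, hpath, heq⟩
    obtain ⟨s, hs, hse⟩ := hconc
    have hsk : s = k + l := reach_k_unique hs hse
      (by
        intro j hj
        by_cases hjl : j < l
        · exact hl j hjl
        · have : p^[j] r = p^[j - l] (p^[l] r) := iterate_split p (by omega) r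
          rw [this, he]
          exact hpath _ (by omega))
      (by rw [Function.iterate_add_apply, he, heq])
    rw [grd_eq_of_reach hs hse, h1, hsk]
    push_cast; ring
  · -- Reach a r with l
    have h1 : grd p A r a = -(l : ℤ) := grd_eq_of_reach_rev hl he
    rcases le_or_gt k l with hkl | hkl
    · obtain ⟨hP, hE⟩ := reach_fwd hkl hpath heq hl he
      rw [grd_eq_of_reach_rev hP hE, h1]
      push_cast [Nat.cast_sub hkl]; ring
    · obtain ⟨hP, hE⟩ := reach_fwd (le_of_lt hkl) hl he hpath heq
      rw [grd_eq_of_reach hP hE, h1]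
      push_cast [Nat.cast_sub (le_of_lt hkl)]; ring

noncomputable def psiC (p : ℕ → ℕ) (A : Set ℕ) (n : ℕ) : ℕ × ℤ :=
  (repC p A n, grd p A (repC p A n) n)

lemma psiC_injective (hinj : Set.InjOn p A) : Function.Injective (psiC p A) := by
  intro m n h
  have hr : repC p A m = repC p A n := congrArg Prod.fst h
  have hg : grd p A (repC p A m) m = grd p A (repC p A m) n := by
    have := congrArg Prod.snd h
    simpa [psiC, hr] using this
  set r := repC p A m with hrdef
  have hrm : RelR p A r m := repC_rel m
  have hrn : RelR p A r n := by
    have hx := repC_rel (p := p) (A := A) n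
    rwa [← hr] at hx
  rcases hrm with ⟨k, hk, he⟩ | ⟨k, hk, he⟩ <;> rcases hrn with ⟨l, hl, he'⟩ | ⟨l, hl, he'⟩
  · have h1 : grd p A r m = k := grd_eq_of_reach hk he
    have h2 : grd p A r n = l := grd_eq_of_reach hl he'
    have hkl : k = l := by exact_mod_cast (h1.symm.trans hg).trans h2
    rw [← he, ← he', hkl]
  · have h1 : grd p A r m = k := grd_eq_of_reach hk he
    have h2 : grd p A r n = -(l : ℤ) := grd_eq_of_reach_rev hl he'
    have hcast : (k : ℤ) = -(l : ℤ) := (h1.symm.trans hg).trans h2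
    have hk0 : k = 0 ∧ l = 0 := by omega
    have hm : m = r := by rw [← he, hk0.1]; simp
    have hn : n = r := by rw [← he', hk0.2]; simp
    rw [hm, hn]
  · have h1 : grd p A r m = -(k : ℤ) := grd_eq_of_reach_rev hk he
    have h2 : grd p A r n = l := grd_eq_of_reach hl he'
    have hcast : -(k : ℤ) = (l : ℤ) := (h1.symm.trans hg).trans h2
    have hk0 : k = 0 ∧ l = 0 := by omega
    have hm : m = r := by rw [← he, hk0.1]; simp
    have hn : n = r := by rw [← he', hk0.2]; simp
    rw [hm, hn]
  · have h1 : grd p A r m = -(k : ℤ) := grd_eq_of_reach_rev hk he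
    have h2 : grd p A r n = -(l : ℤ) := grd_eq_of_reach_rev hl he'
    have hcast : -(k : ℤ) = -(l : ℤ) := (h1.symm.trans hg).trans h2
    have hkl : k = l := by omega
    subst hkl
    apply iterate_cancel hinj (k := k) (fun j hj => (hk j hj).1) (fun j hj => (hl j hj).1)
    rw [he, he']

lemma reach_step {n : ℕ} (hn : n ∈ Dg p A) : Reach p A n (p n) :=
  ⟨1, fun j hj => by simpa [Nat.lt_one_iff.mp hj] using hn, by simp⟩

lemma psiC_equivariant (hinj : Set.InjOn p A) {n : ℕ} (hn : n ∈ Dg p A) :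
    psiC p A (p n) = ((psiC p A n).1, (psiC p A n).2 + 1) := by
  have hstep := reach_step hn
  have hrep : repC p A (p n) = repC p A n := repC_congr hinj (Or.inr hstep)
  have hgrd : grd p A (repC p A n) (p n) = grd p A (repC p A n) n + 1 := by
    have := grd_add hinj (repC_rel n) hstep.choose_spec.1 hstep.choose_spec.2
    have h1 : hstep.choose = 1 :=
      reach_k_unique hstep.choose_spec.1 hstep.choose_spec.2
        (fun j hj => by simpa [Nat.lt_one_iff.mp hj] using hn) (by simp)
    rw [h1] at this
    simpa using this
  simp only [psiC, hrep, hgrd]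

lemma per_no_succ (hinj : Set.InjOn p A) {n m : ℕ} (hn : n ∈ Per p)
    (h1 : repC p A m = repC p A n)
    (h2 : grd p A (repC p A n) m = grd p A (repC p A n) n + 1) : False := by
  have hrm : RelR p A (repC p A n) m := by rw [← h1]; exact repC_rel m
  have hrn : RelR p A (repC p A n) n := repC_rel n
  have hnm : RelR p A n m := relR_trans hinj (relR_symm hrn) hrm
  rcases hnm with ⟨k, hk, he⟩ | ⟨k, hk, he⟩
  · have hadd := grd_add hinj hrn hk he
    have hk1 : (k : ℤ) = 1 := by
      have := hadd.symm.trans h2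
      linarith
    have hk1' : k = 1 := by exact_mod_cast hk1
    subst hk1'
    exact (hk 0 (by omega)).2 (by simpa using hn)
  · have hadd := grd_add hinj hrm hk he
    rw [h2] at hadd
    have : (0 : ℤ) = 1 + k := by linarith
    omega

end ReachTheory

section Nu1

variable (p : ℕ → ℕ) (A : Set ℕ) (W : FreeUF ℕ) (ph : Equiv.Perm (FreeUF ℕ))

open Classical in
noncomputable def nu1 : ℕ × ℤ → Ultrafilter ℕ := fun y =>
  if h : ∃ n, n ∉ Per p ∧ psiC p A n = y then pure h.choose else ((ph ^ y.2) W).1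

variable {p A W ph}

lemma nu1_img (hinj : Set.InjOn p A) {n : ℕ} (hn : n ∉ Per p) :
    nu1 p A W ph (psiC p A n) = pure n := by
  have h : ∃ m, m ∉ Per p ∧ psiC p A m = psiC p A n := ⟨n, hn, rfl⟩
  rw [nu1, dif_pos h]
  congr 1
  exact psiC_injective hinj h.choose_spec.2

lemma nu1_not_img {y : ℕ × ℤ} (hy : ¬ ∃ n, n ∉ Per p ∧ psiC p A n = y) :
    nu1 p A W ph y = ((ph ^ y.2) W).1 := by rw [nu1, dif_neg hy]

lemma nu1_P1 (hinj : Set.InjOn p A) (m : ℕ) :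
    {y : ℕ × ℤ | {m} ∈ nu1 p A W ph y} ⊆ {psiC p A m} := by
  intro y hy
  by_cases h : ∃ n, n ∉ Per p ∧ psiC p A n = y
  · obtain ⟨n, hn, rfl⟩ := h
    rw [mem_setOf_eq, nu1_img hinj hn] at hy
    have hmn : n = m := by simpa [Ultrafilter.mem_pure] using hy
    simp [hmn]
  · rw [mem_setOf_eq, nu1_not_img h] at hy
    exact absurd hy (uf_not_mem_of_finite ((ph ^ y.2) W).2 (Set.finite_singleton m))

lemma nu1_P2 (hinj : Set.InjOn p A) {B : Set ℕ} (himg : p '' A = B)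
    (hph : ∀ V : FreeUF ℕ, (ph V).1 = Ultrafilter.map p V.1) :
    {y : ℕ × ℤ | Ultrafilter.map p (nu1 p A W ph y) ≠ nu1 p A W ph (tmap y)} ⊆
      (psiC p A '' (Aᶜ ∪ ((Per p)ᶜ ∩ {n | p n ∈ Per p}))) ∪
        (tmap ⁻¹' (psiC p A '' (Bᶜ ∩ (Per p)ᶜ))) := by
  intro y hy
  rw [mem_setOf_eq] at hy
  by_cases h : ∃ n, n ∉ Per p ∧ psiC p A n = y
  · obtain ⟨n, hn, rfl⟩ := h
    by_cases hgood : n ∈ A ∧ p n ∉ Per p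
    · exfalso
      apply hy
      have hD : n ∈ Dg p A := ⟨hgood.1, hn⟩
      have heq : tmap (psiC p A n) = psiC p A (p n) := (psiC_equivariant hinj hD).symm
      rw [nu1_img hinj hn, Ultrafilter.map_pure, heq, nu1_img hinj hgood.2]
    · left
      refine ⟨n, ?_, rfl⟩
      rcases not_and_or.mp hgood with h1 | h1
      · exact Or.inl h1
      · exact Or.inr ⟨hn, not_not.mp h1⟩
  · by_cases h' : ∃ m, m ∉ Per p ∧ psiC p A m = tmap y
    · right
      obtain ⟨m, hm, hmy⟩ := h'
      refine Set.mem_preimage.mpr ⟨m, ⟨?_, hm⟩, hmy⟩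
      intro hmB
      rw [← himg] at hmB
      obtain ⟨n, hnA, rfl⟩ := hmB
      have hnP : n ∉ Per p := fun hc => hm (per_image hc)
      have heq : tmap (psiC p A n) = psiC p A (p n) :=
        (psiC_equivariant hinj ⟨hnA, hnP⟩).symm
      apply h
      exact ⟨n, hnP, tmap_injective (by rw [heq, hmy])⟩
    · exfalso
      apply hy
      rw [nu1_not_img h, nu1_not_img h']
      show Ultrafilter.map p (((ph ^ y.2) W).1) = ((ph ^ (y.2 + 1)) W).1
      have hz : (ph ^ (y.2 + 1)) W = ph ((ph ^ y.2) W) := by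
        rw [add_comm, zpow_add, zpow_one]
        rfl
      rw [hz, hph]

lemma nu1_P3 (hinj : Set.InjOn p A) {A' : Set ℕ} (hd : (A' \ Per p).Infinite) :
    {y : ℕ × ℤ | A' ∈ nu1 p A W ph y}.Infinite := by
  apply Set.Infinite.mono (s := psiC p A '' (A' \ Per p))
  · rintro y ⟨n, ⟨hnA', hnP⟩, rfl⟩
    rw [mem_setOf_eq, nu1_img hinj hnP]
    exact Ultrafilter.mem_pure.mpr hnA'
  · exact hd.image ((psiC_injective hinj).injOn)

end Nu1

section CycTheory

variable (p : ℕ → ℕ)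

noncomputable def perlen (x : ℕ) : ℕ := sInf {k | 0 < k ∧ p^[k] x = x}

variable {p}

lemma perlen_spec {x : ℕ} (hx : x ∈ Per p) :
    0 < perlen p x ∧ p^[perlen p x] x = x := Nat.sInf_mem hx

lemma iterate_perlen_mul {x : ℕ} (hx : x ∈ Per p) (q : ℕ) :
    p^[perlen p x * q] x = x := by
  induction q with
  | zero => simp
  | succ q ih =>
      rw [Nat.mul_succ, Function.iterate_add_apply, (perlen_spec hx).2, ih]

lemma iterate_mod {x : ℕ} (hx : x ∈ Per p) (k : ℕ) :
    p^[k] x = p^[k % perlen p x] x := by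
  conv_lhs => rw [← Nat.mod_add_div k (perlen p x), Function.iterate_add_apply]
  rw [iterate_perlen_mul hx]

variable (p) in
def cycSet (x : ℕ) : Set ℕ := {m | ∃ k, p^[k] x = m}

lemma cycSet_self (x : ℕ) : x ∈ cycSet p x := ⟨0, rfl⟩

lemma cycSet_per {x : ℕ} (hx : x ∈ Per p) : cycSet p x ⊆ Per p := by
  rintro m ⟨k, rfl⟩
  exact per_iterate hx k

lemma cycSet_finite {x : ℕ} (hx : x ∈ Per p) : (cycSet p x).Finite := by
  apply Set.Finite.subset ((Set.finite_Iio (perlen p x)).image (fun k => p^[k] x))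
  rintro m ⟨k, rfl⟩
  exact ⟨k % perlen p x, Nat.mod_lt _ (perlen_spec hx).1, (iterate_mod hx k).symm⟩

lemma cyc_symm {x m : ℕ} (hx : x ∈ Per p) (hm : m ∈ cycSet p x) : x ∈ cycSet p m := by
  obtain ⟨k, rfl⟩ := hm
  refine ⟨perlen p x * k - k, ?_⟩
  rw [← Function.iterate_add_apply]
  have hk : perlen p x * k - k + k = perlen p x * k := by
    have := (perlen_spec hx).1
    have : k ≤ perlen p x * k := Nat.le_mul_of_pos_left k this
    omega
  rw [hk, iterate_perlen_mul hx]

lemma cycSet_sub {x m : ℕ} (hm : m ∈ cycSet p x) : cycSet p m ⊆ cycSet p x := by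
  obtain ⟨k, rfl⟩ := hm
  rintro z ⟨j, rfl⟩
  exact ⟨j + k, (Function.iterate_add_apply p j k x)⟩

lemma cycSet_eq {x m : ℕ} (hx : x ∈ Per p) (hm : m ∈ cycSet p x) :
    cycSet p m = cycSet p x :=
  le_antisymm (cycSet_sub hm) (cycSet_sub (cyc_symm hx hm))

variable (p) in
def Rset : Set ℕ := {n | n ∈ Per p ∧ sInf (cycSet p n) = n}

lemma sInf_cyc_mem (x : ℕ) : sInf (cycSet p x) ∈ cycSet p x :=
  Nat.sInf_mem ⟨x, cycSet_self x⟩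

lemma sInf_cyc_Rset {x : ℕ} (hx : x ∈ Per p) : sInf (cycSet p x) ∈ Rset p := by
  refine ⟨cycSet_per hx (sInf_cyc_mem x), ?_⟩
  rw [cycSet_eq hx (sInf_cyc_mem x)]

lemma mem_cyc_sInf {x : ℕ} (hx : x ∈ Per p) : x ∈ cycSet p (sInf (cycSet p x)) :=
  cyc_symm hx (sInf_cyc_mem x)

lemma Rset_infinite (hPer : (Per p).Infinite) : (Rset p).Infinite := by
  intro hfin
  apply hPer
  apply Set.Finite.subset (hfin.biUnion (fun r (hr : r ∈ Rset p) => cycSet_finite hr.1))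
  intro x hx
  exact Set.mem_biUnion (sInf_cyc_Rset hx) (mem_cyc_sInf hx)

variable (p) in
noncomputable def cfun : ℕ → ℕ := Nat.nth (· ∈ Rset p)

lemma cfun_mem (hR : (Rset p).Infinite) (i : ℕ) : cfun p i ∈ Rset p :=
  Nat.nth_mem_of_infinite hR i

lemma cfun_inj (hR : (Rset p).Infinite) : Function.Injective (cfun p) :=
  Nat.nth_injective hR

lemma cfun_surj (hR : (Rset p).Infinite) {r : ℕ} (hr : r ∈ Rset p) :
    ∃ i, cfun p i = r := by
  have h2 := Nat.range_nth_of_infinite (p := fun n => n ∈ Rset p) hR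
  show r ∈ Set.range (Nat.nth (fun n => n ∈ Rset p))
  rw [h2]
  exact hr

variable (p) in
noncomputable def nseq : ℕ → ℕ
  | 0 => max (perlen p (cfun p 0)) 1
  | (i+1) => max (perlen p (cfun p (i+1))) (nseq i + 1)

lemma nseq_ge_per (i : ℕ) : perlen p (cfun p i) ≤ nseq p i := by
  cases i <;> exact le_max_left _ _

lemma nseq_pos (i : ℕ) : 1 ≤ nseq p i := by
  cases i with
  | zero => exact le_max_right _ _
  | succ i => exact le_trans (by omega) (le_max_right _ (nseq p i + 1))

lemma nseq_succ (i : ℕ) : nseq p i + 1 ≤ nseq p (i + 1) := le_max_right _ _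

lemma nseq_strictMono : StrictMono (nseq p) :=
  strictMono_nat_of_lt_succ (fun i => by have := nseq_succ (p := p) i; omega)

lemma nseq_ge_id (i : ℕ) : i + 1 ≤ nseq p i := by
  induction i with
  | zero => exact nseq_pos 0
  | succ i ih => have := nseq_succ (p := p) i; omega

variable (p) in
noncomputable def idxf (n : ℕ) : ℕ := sSup {i | nseq p i ≤ n}

lemma idxf_bdd (n : ℕ) : BddAbove {i | nseq p i ≤ n} :=
  ⟨n, fun i (hi : nseq p i ≤ n) => by have := nseq_ge_id (p := p) i; omega⟩

lemma idxf_spec {n : ℕ} (hn : nseq p 0 ≤ n) : nseq p (idxf p n) ≤ n :=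
  Nat.sSup_mem (⟨0, hn⟩ : {i | nseq p i ≤ n}.Nonempty) (idxf_bdd n)

lemma idxf_le {i n : ℕ} (h : nseq p i ≤ n) : i ≤ idxf p n :=
  le_csSup (idxf_bdd n) h

lemma idxf_nseq (j : ℕ) : idxf p (nseq p j) = j := by
  apply le_antisymm
  · have h1 : nseq p (idxf p (nseq p j)) ≤ nseq p j :=
      idxf_spec (nseq_strictMono.monotone (Nat.zero_le j))
    exact (nseq_strictMono.le_iff_le).mp h1
  · exact idxf_le le_rfl

variable (p) in
noncomputable def nu2 (W : FreeUF ℕ) : Dr → Ultrafilter ℕ := fun y =>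
  if nseq p 0 ≤ y.1.1 then pure (p^[y.1.2] (cfun p (idxf p y.1.1))) else W.1

lemma drBox_finite (K : ℕ) : {y : Dr | y.1.1 < K}.Finite := by
  have h := ((Set.finite_Iio K).prod (Set.finite_Iio (Nat.factorial K))).preimage
    (f := (Subtype.val : Dr → ℕ × ℕ)) (Subtype.val_injective.injOn)
  apply h.subset
  rintro ⟨⟨n, m⟩, h1, h2⟩ hy
  simp only [Set.mem_setOf_eq] at hy
  exact ⟨hy, lt_of_lt_of_le h2 (Nat.factorial_le (by omega))⟩

end CycTheory

section Nu2Prop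

variable {p : ℕ → ℕ}

lemma nu2_P1 (hR : (Rset p).Infinite) (W : FreeUF ℕ) (m : ℕ) :
    {y : Dr | {m} ∈ nu2 p W y}.Finite := by
  by_cases hm : m ∈ Per p
  · obtain ⟨j, hj⟩ := cfun_surj hR (sInf_cyc_Rset hm)
    apply (drBox_finite (nseq p (j+1))).subset
    intro y hy
    simp only [mem_setOf_eq, nu2] at hy
    by_cases hb : nseq p 0 ≤ y.1.1
    · rw [if_pos hb] at hy
      have hval : p^[y.1.2] (cfun p (idxf p y.1.1)) = m := by
        simpa [Ultrafilter.mem_pure] using hy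
      have hci : cfun p (idxf p y.1.1) ∈ Rset p := cfun_mem hR _
      have hmc : m ∈ cycSet p (cfun p (idxf p y.1.1)) := ⟨y.1.2, hval⟩
      have hsinf : sInf (cycSet p m) = cfun p (idxf p y.1.1) := by
        rw [cycSet_eq hci.1 hmc]
        exact hci.2
      have hij : idxf p y.1.1 = j := cfun_inj hR (by rw [← hsinf, hj])
      show y.1.1 < nseq p (j+1)
      by_contra hK
      push_neg at hK
      have h2 : j + 1 ≤ idxf p y.1.1 := idxf_le hK
      omega
    · rw [if_neg hb] at hy
      exact absurd hy (uf_not_mem_of_finite W.2 (Set.finite_singleton m))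
  · apply (drBox_finite 0).subset
    intro y hy
    exfalso
    simp only [mem_setOf_eq, nu2] at hy
    by_cases hb : nseq p 0 ≤ y.1.1
    · rw [if_pos hb] at hy
      have hval : p^[y.1.2] (cfun p (idxf p y.1.1)) = m := by
        simpa [Ultrafilter.mem_pure] using hy
      apply hm
      rw [← hval]
      exact per_iterate (cfun_mem hR _).1 _
    · rw [if_neg hb] at hy
      exact uf_not_mem_of_finite W.2 (Set.finite_singleton m) hy

lemma nu2_P2 (hR : (Rset p).Infinite) (W : FreeUF ℕ) :
    {y : Dr | Ultrafilter.map p (nu2 p W y) ≠ nu2 p W (rcyc y)} ⊆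
      {y : Dr | y.1.1 < nseq p 0} := by
  intro y hy
  rw [mem_setOf_eq] at hy ⊢
  by_contra hb
  push_neg at hb
  apply hy
  obtain ⟨⟨n, m⟩, h1, h2⟩ := y
  simp only [nu2, rcyc] at hb ⊢
  simp only [hb, ↓reduceIte, Ultrafilter.map_pure]
  congr 1
  have hxP : cfun p (idxf p n) ∈ Per p := (cfun_mem hR _).1
  have hdvd : perlen p (cfun p (idxf p n)) ∣ Nat.factorial n :=
    Nat.dvd_factorial (perlen_spec hxP).1 (le_trans (nseq_ge_per _) (idxf_spec hb))
  rw [← Function.iterate_succ_apply' p m, Nat.succ_eq_add_one,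
    iterate_mod hxP (m+1), iterate_mod hxP ((m+1) % Nat.factorial n),
    Nat.mod_mod_of_dvd _ hdvd]

lemma nu2_P3 (hR : (Rset p).Infinite) (W : FreeUF ℕ) {A' : Set ℕ}
    (h : (A' ∩ Per p).Infinite) : {y : Dr | A' ∈ nu2 p W y}.Infinite := by
  haveI : Infinite (A' ∩ Per p : Set ℕ) := h.to_subtype
  have exP : ∀ z : (A' ∩ Per p : Set ℕ), ∃ y : Dr,
      A' ∈ nu2 p W y ∧ p^[y.1.2] (cfun p (idxf p y.1.1)) = (z : ℕ) := by
    rintro ⟨x, hxA, hxP⟩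
    obtain ⟨j, hj⟩ := cfun_surj hR (sInf_cyc_Rset hxP)
    obtain ⟨k0, hk0⟩ := mem_cyc_sInf hxP
    have hrP : sInf (cycSet p x) ∈ Per p := (sInf_cyc_Rset hxP).1
    have hm : p^[k0 % perlen p (sInf (cycSet p x))] (sInf (cycSet p x)) = x :=
      (iterate_mod hrP k0).symm.trans hk0
    have hmlt : k0 % perlen p (sInf (cycSet p x)) < perlen p (sInf (cycSet p x)) :=
      Nat.mod_lt _ (perlen_spec hrP).1
    have hple : perlen p (sInf (cycSet p x)) ≤ nseq p j := by
      rw [← hj]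
      exact nseq_ge_per j
    have hmlt2 : k0 % perlen p (sInf (cycSet p x)) < Nat.factorial (nseq p j) :=
      lt_of_lt_of_le hmlt (le_trans hple (Nat.self_le_factorial _))
    refine ⟨⟨(nseq p j, k0 % perlen p (sInf (cycSet p x))), ⟨nseq_pos j, hmlt2⟩⟩, ?_, ?_⟩
    · show A' ∈ nu2 p W _
      simp only [nu2]
      rw [if_pos (nseq_strictMono.monotone (Nat.zero_le j))]
      show A' ∈ (pure (p^[k0 % perlen p (sInf (cycSet p x))] (cfun p (idxf p (nseq p j)))) : Ultrafilter ℕ)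
      rw [idxf_nseq, hj, hm]
      exact Ultrafilter.mem_pure.mpr hxA
    · show p^[k0 % perlen p (sInf (cycSet p x))] (cfun p (idxf p (nseq p j))) = x
      rw [idxf_nseq, hj, hm]
  choose f hf1 hf2 using exP
  apply Set.infinite_of_injective_forall_mem (f := f)
  · intro a b hab
    apply Subtype.ext
    rw [← hf2 a, ← hf2 b, hab]
  · exact hf1

end Nu2Prop

section FinAux

lemma fto_preimage {p : ℕ → ℕ} (hp : ∀ n : ℕ, (p ⁻¹' {n}).Finite) {F : Set ℕ}
    (hF : F.Finite) : (p ⁻¹' F).Finite := by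
  have hE : p ⁻¹' F = ⋃ x ∈ F, p ⁻¹' {x} := by ext n; simp
  rw [hE]
  exact hF.biUnion (fun x _ => hp x)

lemma entry_finite {p : ℕ → ℕ} (hp : ∀ n : ℕ, (p ⁻¹' {n}).Finite) {A : Set ℕ}
    (hinj : Set.InjOn p A) (hAc : Aᶜ.Finite) :
    ({n | n ∉ Per p ∧ p n ∈ Per p}).Finite := by
  apply (hAc.union (fto_preimage hp ((hAc.inter_of_left (Per p)).image p))).subset
  rintro n ⟨hnP, hpnP⟩
  obtain ⟨w, hwP, hw⟩ := per_pre hpnP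
  by_cases hnA : n ∈ A
  · right
    by_cases hwA : w ∈ A
    · exact absurd (hinj hwA hnA hw ▸ hwP) hnP
    · exact ⟨w, ⟨hwA, hwP⟩, hw⟩
  · exact Or.inl hnA

open Classical in
noncomputable def qinv (p : ℕ → ℕ) (A : Set ℕ) : ℕ → ℕ := fun n =>
  if h : ∃ a ∈ A, p a = n then h.choose else 0

lemma qinv_spec {p : ℕ → ℕ} {A : Set ℕ} {n : ℕ} (hn : ∃ a ∈ A, p a = n) :
    qinv p A n ∈ A ∧ p (qinv p A n) = n := by
  rw [qinv, dif_pos hn]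
  exact ⟨hn.choose_spec.1, hn.choose_spec.2⟩

lemma qinv_qp {p : ℕ → ℕ} {A : Set ℕ} (hinj : Set.InjOn p A) {n : ℕ} (hn : n ∈ A) :
    qinv p A (p n) = n := by
  have hex : ∃ a ∈ A, p a = p n := ⟨n, hn, rfl⟩
  exact hinj (qinv_spec hex).1 hn (qinv_spec hex).2

lemma qinv_pq {p : ℕ → ℕ} {A B : Set ℕ} (himg : p '' A = B) {n : ℕ} (hn : n ∈ B) :
    p (qinv p A n) = n := by
  rw [← himg] at hn
  obtain ⟨a, ha, rfl⟩ := hn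
  exact (qinv_spec ⟨a, ha, rfl⟩).2

lemma qinv_fto {p : ℕ → ℕ} {A B : Set ℕ} (himg : p '' A = B) (hBc : Bᶜ.Finite) :
    ∀ d : ℕ, (qinv p A ⁻¹' {d}).Finite := by
  intro d
  apply ((Set.finite_singleton (p d)).union hBc).subset
  intro n hn
  rw [Set.mem_preimage, Set.mem_singleton_iff] at hn
  by_cases hex : ∃ a ∈ A, p a = n
  · left
    have hs := qinv_spec hex
    rw [hn] at hs
    rw [Set.mem_singleton_iff, ← hs.2]
  · right
    intro hB
    rw [← himg] at hB
    obtain ⟨a, ha, rfl⟩ := hB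
    exact hex ⟨a, ha, rfl⟩

noncomputable def phat (p : ℕ → ℕ) (hp : ∀ n : ℕ, (p ⁻¹' {n}).Finite) (q : ℕ → ℕ)
    (hq : ∀ d : ℕ, (q ⁻¹' {d}).Finite) (hqp : {n | q (p n) = n}ᶜ.Finite)
    (hpq : {n | p (q n) = n}ᶜ.Finite) : Equiv.Perm (FreeUF ℕ) where
  toFun := ufMap p hp
  invFun := ufMap q hq
  left_inv U := by
    apply Subtype.ext
    show Ultrafilter.map q (Ultrafilter.map p U.1) = U.1
    rw [Ultrafilter.map_map]
    apply Ultrafilter.coe_injective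
    show Filter.map (q ∘ p) (U.1 : Filter ℕ) = (U.1 : Filter ℕ)
    have hev : (q ∘ p) =ᶠ[(U.1 : Filter ℕ)] id := uf_mem_of_cofinite U.2 hqp
    rw [Filter.map_congr hev, Filter.map_id]
  right_inv U := by
    apply Subtype.ext
    show Ultrafilter.map p (Ultrafilter.map q U.1) = U.1
    rw [Ultrafilter.map_map]
    apply Ultrafilter.coe_injective
    show Filter.map (p ∘ q) (U.1 : Filter ℕ) = (U.1 : Filter ℕ)
    have hev : (p ∘ q) =ᶠ[(U.1 : Filter ℕ)] id := uf_mem_of_cofinite U.2 hpq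
    rw [Filter.map_congr hev, Filter.map_id]

end FinAux
/-- (ZFC) Every trivial autohomeomorphism of `ℕ*` is a quotient of `t*` or of `(t ∨ r)*`:
for every mod-finite permutation `p` of `ℕ`, either `p*` is a quotient of the trivial map
induced by `t(n,z) = (n,z+1)` on `(ℕ × ℤ)*`, or `p*` is a quotient of the trivial map
induced by `t ∨ r` on `((ℕ × ℤ) ⊔ D_r)*`. -/
theorem trivial_embeds_in_t_or_tvr
    (p : ℕ → ℕ) (hp : ∀ n : ℕ, (p ⁻¹' {n}).Finite)
    (hperm : ∃ A B : Set ℕ, Aᶜ.Finite ∧ Bᶜ.Finite ∧ Set.BijOn p A B) :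
    (∃ Q : FreeUF (ℕ × ℤ) → FreeUF ℕ, Continuous Q ∧ Function.Surjective Q ∧
        ∀ U, Q (ufMap tmap (finiteToOne_of_injective tmap_injective) U)
          = ufMap p hp (Q U)) ∨
    (∃ Q : FreeUF ((ℕ × ℤ) ⊕ Dr) → FreeUF ℕ, Continuous Q ∧ Function.Surjective Q ∧
        ∀ U, Q (ufMap (Sum.map tmap rcyc)
            (finiteToOne_of_injective (tmap_injective.sumMap rcyc_injective)) U)
          = ufMap p hp (Q U)) := by
  obtain ⟨A, B, hAc, hBc, hbij⟩ := hperm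
  have hinj : Set.InjOn p A := hbij.injOn
  have himg : p '' A = B := hbij.image_eq
  have hqp : {n | qinv p A (p n) = n}ᶜ.Finite := by
    apply hAc.subset
    intro n hn hnA
    exact hn (qinv_qp hinj hnA)
  have hpq : {n | p (qinv p A n) = n}ᶜ.Finite := by
    apply hBc.subset
    intro n hn hnB
    exact hn (qinv_pq himg hnB)
  let PH := phat p hp (qinv p A) (qinv_fto himg hBc) hqp hpq
  let Wf : FreeUF ℕ := ⟨Ultrafilter.of Filter.cofinite, Ultrafilter.of_le _⟩
  have hph : ∀ V : FreeUF ℕ, (PH V).1 = Ultrafilter.map p V.1 := fun V => rfl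
  by_cases hPer : (Per p).Finite
  · left
    have h1 : ∀ m : ℕ, {y : ℕ × ℤ | {m} ∈ nu1 p A Wf PH y}.Finite :=
      fun m => (Set.finite_singleton _).subset (nu1_P1 hinj m)
    have hE : ((Per p)ᶜ ∩ {n | p n ∈ Per p}).Finite :=
      (fto_preimage hp hPer).subset (fun n hn => hn.2)
    have h2 : {y : ℕ × ℤ | Ultrafilter.map p (nu1 p A Wf PH y)
        ≠ nu1 p A Wf PH (tmap y)}.Finite := by
      apply Set.Finite.subset ?_ (nu1_P2 hinj himg hph)
      exact ((hAc.union hE).image _).union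
        (((hBc.inter_of_left _).image _).preimage (tmap_injective.injOn))
    have h3 : ∀ A' : Set ℕ, A'.Infinite → {y : ℕ × ℤ | A' ∈ nu1 p A Wf PH y}.Infinite :=
      fun A' hA' => nu1_P3 hinj (hA'.diff hPer)
    exact build_Q tmap (finiteToOne_of_injective tmap_injective) p hp
      (nu1 p A Wf PH) h1 h2 h3
  · right
    have hPI : (Per p).Infinite := hPer
    have hR : (Rset p).Infinite := Rset_infinite hPI
    have h1 : ∀ m : ℕ, {y : (ℕ × ℤ) ⊕ Dr |
        {m} ∈ Sum.elim (nu1 p A Wf PH) (nu2 p Wf) y}.Finite := by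
      intro m
      have hsub : {y : (ℕ × ℤ) ⊕ Dr | {m} ∈ Sum.elim (nu1 p A Wf PH) (nu2 p Wf) y} ⊆
          (Sum.inl '' {z : ℕ × ℤ | {m} ∈ nu1 p A Wf PH z}) ∪
            (Sum.inr '' {z : Dr | {m} ∈ nu2 p Wf z}) := by
        intro y hy
        cases y with
        | inl z => exact Or.inl ⟨z, hy, rfl⟩
        | inr z => exact Or.inr ⟨z, hy, rfl⟩
      exact ((((Set.finite_singleton _).subset (nu1_P1 hinj m)).image _).union
        ((nu2_P1 hR Wf m).image _)).subset hsub
    have hE : ((Per p)ᶜ ∩ {n | p n ∈ Per p}).Finite :=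
      (entry_finite hp hinj hAc).subset (fun n hn => ⟨hn.1, hn.2⟩)
    have hD1 : {z : ℕ × ℤ | Ultrafilter.map p (nu1 p A Wf PH z)
        ≠ nu1 p A Wf PH (tmap z)}.Finite := by
      apply Set.Finite.subset ?_ (nu1_P2 hinj himg hph)
      exact ((hAc.union hE).image _).union
        (((hBc.inter_of_left _).image _).preimage (tmap_injective.injOn))
    have hD2 : {z : Dr | Ultrafilter.map p (nu2 p Wf z) ≠ nu2 p Wf (rcyc z)}.Finite :=
      (drBox_finite _).subset (nu2_P2 hR Wf)
    have h2 : {y : (ℕ × ℤ) ⊕ Dr | Ultrafilter.map p (Sum.elim (nu1 p A Wf PH) (nu2 p Wf) y)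
        ≠ Sum.elim (nu1 p A Wf PH) (nu2 p Wf) (Sum.map tmap rcyc y)}.Finite := by
      have hsub : {y : (ℕ × ℤ) ⊕ Dr |
          Ultrafilter.map p (Sum.elim (nu1 p A Wf PH) (nu2 p Wf) y)
            ≠ Sum.elim (nu1 p A Wf PH) (nu2 p Wf) (Sum.map tmap rcyc y)} ⊆
          (Sum.inl '' {z : ℕ × ℤ | Ultrafilter.map p (nu1 p A Wf PH z)
              ≠ nu1 p A Wf PH (tmap z)}) ∪
            (Sum.inr '' {z : Dr | Ultrafilter.map p (nu2 p Wf z) ≠ nu2 p Wf (rcyc z)}) := by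
        intro y hy
        cases y with
        | inl z => exact Or.inl ⟨z, hy, rfl⟩
        | inr z => exact Or.inr ⟨z, hy, rfl⟩
      exact ((hD1.image _).union (hD2.image _)).subset hsub
    have h3 : ∀ A' : Set ℕ, A'.Infinite →
        {y : (ℕ × ℤ) ⊕ Dr | A' ∈ Sum.elim (nu1 p A Wf PH) (nu2 p Wf) y}.Infinite := by
      intro A' hA'
      by_cases hint : (A' ∩ Per p).Infinite
      · apply Set.Infinite.mono (s := Sum.inr '' {z : Dr | A' ∈ nu2 p Wf z})
        · rintro y ⟨z, hz, rfl⟩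
          exact hz
        · exact (nu2_P3 hR Wf hint).image (Sum.inr_injective.injOn)
      · have hdiff : (A' \ Per p).Infinite := by
          rw [Set.not_infinite] at hint
          intro hfin
          apply hA'
          apply (hfin.union hint).subset
          intro x hx
          by_cases hxP : x ∈ Per p
          · exact Or.inr ⟨hx, hxP⟩
          · exact Or.inl ⟨hx, hxP⟩
        apply Set.Infinite.mono (s := Sum.inl '' {z : ℕ × ℤ | A' ∈ nu1 p A Wf PH z})
        · rintro y ⟨z, hz, rfl⟩
          exact hz
        · exact (nu1_P3 hinj hdiff).image (Sum.inl_injective.injOn)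
    exact build_Q (Sum.map tmap rcyc)
      (finiteToOne_of_injective (tmap_injective.sumMap rcyc_injective)) p hp
      (Sum.elim (nu1 p A Wf PH) (nu2 p Wf)) h1 h2 h3
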